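/- Let n ≥ 2, let M be an n-connected binary matroid with |E(M)| ≥ 2n-2, and let T ⊆ E(M) with |T| = n-1. If the element splitting matroid M'_T is n-connected, then every cocircuit Q of M with Q ∩ T ≠ ∅ satisfies |Q| ≥ 2|Q ∩ T|. -/

import Mathlib

open Set

variable {α : Type*}

/-- The rank of a set `X` in a matroid `M`: the maximum size of an independent subset of `X`. -/
noncomputable def mrank (M : Matroid α) (X : Set α) : ℕ :=
  sSup {n | ∃ I, M.Indep I ∧ I ⊆ X ∧ I.ncard = n}

/-- `(A, B)` is a `k`-separation of `M`: a partition of the ground set with both sides of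
size at least `k` and `r(A) + r(B) - r(M) ≤ k - 1` (written additively). -/
def IsKSeparation (M : Matroid α) (k : ℕ) (A B : Set α) : Prop :=
  A ∪ B = M.E ∧ Disjoint A B ∧ k ≤ A.ncard ∧ k ≤ B.ncard ∧
    mrank M A + mrank M B + 1 ≤ mrank M M.E + k

/-- `M` is `n`-connected if it has no `k`-separation for any `k < n`. -/
def NConnected (M : Matroid α) (n : ℕ) : Prop :=
  ∀ k A B, 1 ≤ k → k < n → ¬ IsKSeparation M k A B

/-- A circuit is a minimal dependent set. -/
def MCircuit (M : Matroid α) (C : Set α) : Prop := Minimal M.Dep C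

/-- A cocircuit is a circuit of the dual matroid. -/
def MCocircuit (M : Matroid α) (C : Set α) : Prop := MCircuit M✶ C

/-- A loop is a dependent singleton. -/
def MLoop (M : Matroid α) (e : α) : Prop := M.Dep {e}

/-- A coloop is a loop of the dual, i.e. an element lying in every base. -/
def MColoop (M : Matroid α) (e : α) : Prop := M✶.Dep {e}

/-- `M` is the vector matroid of the family of vectors `φ` over `GF(2)`:
a set is independent iff it lies in the ground set and the corresponding
vectors are linearly independent. -/
def IsRep {W : Type*} [AddCommGroup W] [Module (ZMod 2) W] (M : Matroid α) (φ : α → W) : Prop :=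
  ∀ I : Set α, M.Indep I ↔ I ⊆ M.E ∧ LinearIndependent (ZMod 2) (I.restrict φ)

open scoped Classical in
/-- The columns of the element splitting matrix `A'_T`: each original column gets an extra
coordinate (the new row), equal to `1` exactly on the columns labelled by `T`, and a new
column `a` which is `1` in the new row and `0` elsewhere. -/
noncomputable def splitRep {W : Type*} [AddCommGroup W] [Module (ZMod 2) W]
    (φ : α → W) (T : Set α) (a : α) : α → W × ZMod 2 :=
  fun x => if x = a then (0, 1) else (φ x, if x ∈ T then 1 else 0)

/-- `N` is the element splitting matroid `M'_T` of the binary matroid `M` (represented by `φ`)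
with respect to `T`, with new element `a`. -/
def IsEleSplit {W : Type*} [AddCommGroup W] [Module (ZMod 2) W]
    (M : Matroid α) (φ : α → W) (T : Set α) (a : α) (N : Matroid α) : Prop :=
  a ∉ M.E ∧ N.E = insert a M.E ∧ IsRep N (splitRep φ T a)

/-- `M` is the contraction `N / a` of the single element `a` from `N`. -/
def ContractElemEq (N : Matroid α) (a : α) (M : Matroid α) : Prop :=
  M.E = N.E \ {a} ∧ ∀ I : Set α,
    M.Indep I ↔ a ∉ I ∧
      ((N.Indep {a} ∧ N.Indep (insert a I)) ∨ (¬ N.Indep {a} ∧ N.Indep I))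


section AuxProof

open Submodule

variable {W : Type*} [AddCommGroup W] [Module (ZMod 2) W]

lemma zmod2_forall_eq_one : ∀ u : ZMod 2, u ≠ 0 → u = 1 := by decide

lemma zmod2_forall_eq_zero : ∀ u : ZMod 2, u ≠ 1 → u = 0 := by decide

lemma zmod2_eq_one_of_ne_zero {u : ZMod 2} (h : u ≠ 0) : u = 1 := zmod2_forall_eq_one u h

lemma zmod2_eq_zero_of_ne_one {u : ZMod 2} (h : u ≠ 1) : u = 0 := zmod2_forall_eq_zero u h

lemma mrank_bdd (M : Matroid α) (hE : M.E.Finite) (X : Set α) :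
    BddAbove {n | ∃ I, M.Indep I ∧ I ⊆ X ∧ I.ncard = n} := by
  refine ⟨M.E.ncard, fun n hn => ?_⟩
  obtain ⟨I, hI, _, rfl⟩ := hn
  exact Set.ncard_le_ncard hI.subset_ground hE

lemma le_mrank (M : Matroid α) (hE : M.E.Finite) {X I : Set α}
    (hI : M.Indep I) (hIX : I ⊆ X) : I.ncard ≤ mrank M X :=
  le_csSup (mrank_bdd M hE X) ⟨I, hI, hIX, rfl⟩

lemma mrank_le_ncard' (M : Matroid α) {X : Set α} (hX : X.Finite) :
    mrank M X ≤ X.ncard := by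
  have hne : {n | ∃ I, M.Indep I ∧ I ⊆ X ∧ I.ncard = n}.Nonempty :=
    ⟨0, ∅, M.empty_indep, Set.empty_subset X, by simp⟩
  rw [mrank]
  apply csSup_le hne
  rintro n ⟨I, hI, hIX, rfl⟩
  exact Set.ncard_le_ncard hIX hX

lemma exists_mrank_witness (M : Matroid α) (hE : M.E.Finite) (X : Set α) :
    ∃ I, M.Indep I ∧ I ⊆ X ∧ I.ncard = mrank M X := by
  have hne : {n | ∃ I, M.Indep I ∧ I ⊆ X ∧ I.ncard = n}.Nonempty :=
    ⟨0, ∅, M.empty_indep, Set.empty_subset X, by simp⟩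
  exact Nat.sSup_mem hne (mrank_bdd M hE X)

lemma indep_insert_of_not_mem_span {M : Matroid α} {φ : α → W} (hM : IsRep M φ)
    {I : Set α} (hI : M.Indep I) {x : α} (hx : x ∈ M.E)
    (hsp : φ x ∉ Submodule.span (ZMod 2) (φ '' I)) : M.Indep (insert x I) := by
  have hxI : x ∉ I := fun h => hsp (Submodule.subset_span ⟨x, h, rfl⟩)
  rw [hM] at hI ⊢
  exact ⟨Set.insert_subset hx hI.1, (linearIndepOn_insert hxI).2 ⟨hI.2, hsp⟩⟩

lemma span_witness {M : Matroid α} {φ : α → W} (hM : IsRep M φ) (hE : M.E.Finite)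
    {X I : Set α} (hX : X ⊆ M.E) (hI : M.Indep I) (hIX : I ⊆ X)
    (hcard : I.ncard = mrank M X) : ∀ x ∈ X, φ x ∈ Submodule.span (ZMod 2) (φ '' I) := by
  intro x hx
  by_contra hsp
  have hxI : x ∉ I := fun h => hsp (Submodule.subset_span ⟨x, h, rfl⟩)
  have hins := indep_insert_of_not_mem_span hM hI (hX hx) hsp
  have hle := le_mrank M hE hins (Set.insert_subset hx hIX)
  have hfin : I.Finite := hE.subset hI.subset_ground
  rw [Set.ncard_insert_of_notMem hxI hfin, hcard] at hle
  omega

lemma mrank_lt_of_functional {M : Matroid α} {φ : α → W} (hM : IsRep M φ) (hE : M.E.Finite)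
    {S : Set α} (f : W →ₗ[ZMod 2] ZMod 2)
    (hf0 : ∀ x ∈ M.E \ S, f (φ x) = 0)
    {x0 : α} (hx0 : x0 ∈ M.E) (hfx0 : f (φ x0) ≠ 0) :
    mrank M (M.E \ S) + 1 ≤ mrank M M.E := by
  obtain ⟨I, hI, hIX, hcard⟩ := exists_mrank_witness M hE (M.E \ S)
  have hker : Submodule.span (ZMod 2) (φ '' I) ≤ LinearMap.ker f := by
    rw [Submodule.span_le]
    rintro v ⟨x, hxI, rfl⟩
    exact LinearMap.mem_ker.2 (hf0 x (hIX hxI))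
  have hsp : φ x0 ∉ Submodule.span (ZMod 2) (φ '' I) :=
    fun h => hfx0 (LinearMap.mem_ker.1 (hker h))
  have hins := indep_insert_of_not_mem_span hM hI hx0 hsp
  have hle := le_mrank M hE hins (Set.insert_subset hx0 (hIX.trans Set.diff_subset))
  have hxI : x0 ∉ I := fun h => hsp (Submodule.subset_span ⟨x0, h, rfl⟩)
  have hfin : I.Finite := hE.subset hI.subset_ground
  rw [Set.ncard_insert_of_notMem hxI hfin, hcard] at hle
  omega

lemma base_ncard {M : Matroid α} (hE : M.E.Finite) {B : Set α} (hB : M.IsBase B) :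
    B.ncard = mrank M M.E := by
  refine le_antisymm (le_mrank M hE hB.indep hB.subset_ground) ?_
  obtain ⟨J, hJ, _, hcard⟩ := exists_mrank_witness M hE M.E
  obtain ⟨B', hB', hJB'⟩ := hJ.exists_isBase_superset
  have h1 : J.ncard ≤ B'.ncard := Set.ncard_le_ncard hJB' (hE.subset hB'.subset_ground)
  have h2 : B'.ncard = B.ncard := hB'.ncard_eq_ncard_of_isBase hB
  omega

lemma gap_of_not_coindep {M : Matroid α} (hE : M.E.Finite) {Q : Set α}
    (hQ : ¬ M✶.Indep Q) (hQE : Q ⊆ M.E) : mrank M (M.E \ Q) + 1 ≤ mrank M M.E := by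
  by_contra hcon
  obtain ⟨I, hI, hIX, hIcard⟩ := exists_mrank_witness M hE (M.E \ Q)
  have hle : mrank M M.E ≤ I.ncard := by
    have := le_mrank M hE hI (hIX.trans Set.diff_subset)
    omega
  obtain ⟨B, hB, hIB⟩ := hI.exists_isBase_superset
  have hBle : B.ncard ≤ I.ncard := (base_ncard hE hB).le.trans hle
  have hIBeq : I = B := Set.eq_of_subset_of_ncard_le hIB hBle (hE.subset hB.subset_ground)
  exact hQ (Matroid.dual_indep_iff_exists'.2
    ⟨hQE, B, hB, Set.disjoint_left.2 fun x hxQ hxB => (hIX (hIBeq ▸ hxB)).2 hxQ⟩)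

lemma not_coindep_of_gap {M : Matroid α} (hE : M.E.Finite) {S : Set α}
    (hgap : mrank M (M.E \ S) + 1 ≤ mrank M M.E) : ¬ M✶.Indep S := by
  rintro ⟨-, B, hB, hdisj⟩
  have hBsub : B ⊆ M.E \ S := fun x hx =>
    ⟨hB.subset_ground hx, fun hxS => hdisj.ne_of_mem hxS hx rfl⟩
  have h1 : B.ncard ≤ mrank M (M.E \ S) := le_mrank M hE hB.indep hBsub
  have h2 : B.ncard = mrank M M.E := base_ncard hE hB
  omega

lemma exists_functional_of_cocircuit {M : Matroid α} {φ : α → W} (hM : IsRep M φ)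
    (hE : M.E.Finite) {Q : Set α} (hQ : MCocircuit M Q) :
    ∃ g : W →ₗ[ZMod 2] ZMod 2, ∀ x ∈ M.E, (g (φ x) = 1 ↔ x ∈ Q) := by
  have hQdep : M✶.Dep Q := hQ.1
  have hQE : Q ⊆ M.E := by simpa using hQdep.subset_ground
  have hgap := gap_of_not_coindep hE hQdep.not_indep hQE
  obtain ⟨I, hI, hIX, hIcard⟩ := exists_mrank_witness M hE (M.E \ Q)
  obtain ⟨B, hB, hIB⟩ := hI.exists_isBase_superset
  have hBcard : B.ncard = mrank M M.E := base_ncard hE hB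
  have hne : I ≠ B := by
    intro h
    rw [h, hBcard] at hIcard
    omega
  obtain ⟨x0, hx0B, hx0I⟩ := Set.exists_of_ssubset (hIB.ssubset_of_ne hne)
  -- φ x0 is not in the span of φ '' I
  have hBli : LinearIndependent (ZMod 2) (B.restrict φ) := ((hM B).1 hB.indep).2
  have himg : (B.restrict φ) '' {y : ↥B | (y : α) ∈ I} = φ '' I := by
    ext z
    constructor
    · rintro ⟨y, hy, rfl⟩
      exact ⟨y, hy, rfl⟩
    · rintro ⟨x, hx, rfl⟩
      exact ⟨⟨x, hIB hx⟩, hx, rfl⟩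
  have hsp : φ x0 ∉ Submodule.span (ZMod 2) (φ '' I) := by
    have := hBli.notMem_span_image (s := {y : ↥B | (y : α) ∈ I}) (x := ⟨x0, hx0B⟩) hx0I
    rwa [himg] at this
  set p : Submodule (ZMod 2) W := Submodule.span (ZMod 2) (φ '' I) with hp
  have hm : p.mkQ (φ x0) ≠ 0 := by simpa using hsp
  obtain ⟨h, hh⟩ : ∃ h : Module.Dual (ZMod 2) (W ⧸ p), h (p.mkQ (φ x0)) ≠ 0 := by
    by_contra hcon
    push_neg at hcon
    exact hm ((Module.forall_dual_apply_eq_zero_iff (ZMod 2) _).1 hcon)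
  set g : W →ₗ[ZMod 2] ZMod 2 := h.comp p.mkQ with hg
  have hg0 : ∀ x ∈ M.E \ Q, g (φ x) = 0 := by
    intro x hx
    have hmem : φ x ∈ p := span_witness hM hE Set.diff_subset hI hIX hIcard x hx
    have : p.mkQ (φ x) = 0 := by simpa using hmem
    simp [hg, LinearMap.comp_apply, this]
  have hx0E : x0 ∈ M.E := hB.subset_ground hx0B
  have hgx0 : g (φ x0) = 1 := zmod2_eq_one_of_ne_zero hh
  set S : Set α := {x | x ∈ M.E ∧ g (φ x) = 1} with hSdef
  have hSQ : S ⊆ Q := by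
    rintro x ⟨hxE, hgx⟩
    by_contra hxQ
    rw [hg0 x ⟨hxE, hxQ⟩] at hgx
    exact one_ne_zero hgx.symm
  have hSdep : M✶.Dep S := by
    rw [Matroid.dep_iff]
    refine ⟨not_coindep_of_gap hE ?_, fun x (hx : x ∈ S) => hx.1⟩
    exact mrank_lt_of_functional hM hE g
      (fun x hx => zmod2_eq_zero_of_ne_one fun h1 => hx.2 ⟨hx.1, h1⟩) hx0E
      (by rw [hgx0]; exact one_ne_zero)
  have hQS : Q ⊆ S := hQ.2 hSdep hSQ
  refine ⟨g, fun x hx => ⟨fun hgx => hSQ ⟨hx, hgx⟩, fun hxQ => (hQS hxQ).2⟩⟩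

end AuxProof

/-- If M'_T is n-connected, then every cocircuit Q of M meeting T satisfies
|Q| ≥ 2|Q ∩ T|. -/
theorem cocircuit_cond_of_eleSplit_nConnected {α W : Type*}
    [AddCommGroup W] [Module (ZMod 2) W]
    (n : ℕ) (hn : 2 ≤ n) (M N : Matroid α) (φ : α → W) (hM : IsRep M φ)
    (hfin : M.E.Finite) (hcard : 2 * n - 2 ≤ M.E.ncard) (hconn : NConnected M n)
    (T : Set α) (hT : T ⊆ M.E) (hTcard : T.ncard = n - 1)
    (a : α) (hN : IsEleSplit M φ T a N)
    (hNconn : NConnected N n) :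
    ∀ Q : Set α, MCocircuit M Q → (Q ∩ T).Nonempty → 2 * (Q ∩ T).ncard ≤ Q.ncard := by
  classical
  intro Q hQ hQT
  by_contra hcon
  push_neg at hcon
  obtain ⟨haE, hNE, hNrep⟩ := hN
  have hNEfin : N.E.Finite := hNE ▸ hfin.insert a
  obtain ⟨g, hg⟩ := exists_functional_of_cocircuit hM hfin hQ
  have hQE : Q ⊆ M.E := by simpa using (hQ.1 : M✶.Dep Q).subset_ground
  set f : W × ZMod 2 →ₗ[ZMod 2] ZMod 2 :=
    g.comp (LinearMap.fst (ZMod 2) W (ZMod 2)) + LinearMap.snd (ZMod 2) W (ZMod 2) with hf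
  set φ' := splitRep φ T a with hφ'
  have hfa : f (φ' a) = 1 := by
    simp [hf, hφ', splitRep]
  set S : Set α := {x | x ∈ N.E ∧ f (φ' x) = 1} with hS
  have haS : a ∈ S := ⟨hNE ▸ Set.mem_insert a M.E, hfa⟩
  have hval : ∀ x ∈ M.E,
      f (φ' x) = (if x ∈ Q then 1 else 0) + (if x ∈ T then 1 else 0) := by
    intro x hx
    have hxa : x ≠ a := fun h => haE (h ▸ hx)
    have hgx : g (φ x) = if x ∈ Q then 1 else 0 := by
      by_cases hxQ : x ∈ Q
      · rw [if_pos hxQ]; exact (hg x hx).2 hxQ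
      · rw [if_neg hxQ]
        exact zmod2_eq_zero_of_ne_one fun h1 => hxQ ((hg x hx).1 h1)
    simp only [hφ', splitRep, if_neg hxa, hf, LinearMap.add_apply, LinearMap.comp_apply,
      LinearMap.fst_apply, LinearMap.snd_apply, hgx]
  have hSsub : S ⊆ (Q \ T) ∪ (T \ Q) ∪ {a} := by
    rintro x ⟨hxE, hfx⟩
    rcases (hNE ▸ hxE : x ∈ insert a M.E) with rfl | hxM
    · exact Or.inr rfl
    · rw [hval x hxM] at hfx
      by_cases hxQ : x ∈ Q <;> by_cases hxT : x ∈ T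
      · exfalso; rw [if_pos hxQ, if_pos hxT] at hfx; revert hfx; decide
      · exact Or.inl (Or.inl ⟨hxQ, hxT⟩)
      · exact Or.inl (Or.inr ⟨hxT, hxQ⟩)
      · exfalso; rw [if_neg hxQ, if_neg hxT] at hfx; revert hfx; decide
  have hQfin : Q.Finite := hfin.subset hQE
  have hTfin : T.Finite := hfin.subset hT
  have h1 : (Q ∩ T).ncard + (Q \ T).ncard = Q.ncard :=
    Set.ncard_inter_add_ncard_diff_eq_ncard Q T hQfin
  have h2 : (T ∩ Q).ncard + (T \ Q).ncard = T.ncard :=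
    Set.ncard_inter_add_ncard_diff_eq_ncard T Q hTfin
  have hTQ : (T ∩ Q).ncard = (Q ∩ T).ncard := by rw [Set.inter_comm]
  have hq1 : 1 ≤ (Q ∩ T).ncard := (Set.ncard_pos (hQfin.inter_of_left T)).2 hQT
  have hSfin : S.Finite := hNEfin.subset fun x hx => hx.1
  have hDfin : ((Q \ T) ∪ (T \ Q) ∪ {a} : Set α).Finite :=
    (((hQfin.diff (t := T)).union (hTfin.diff (t := Q))).union (Set.finite_singleton a))
  have hScard : S.ncard ≤ (Q \ T).ncard + (T \ Q).ncard + 1 := by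
    calc S.ncard ≤ ((Q \ T) ∪ (T \ Q) ∪ {a}).ncard := Set.ncard_le_ncard hSsub hDfin
    _ ≤ ((Q \ T) ∪ (T \ Q)).ncard + ({a} : Set α).ncard := Set.ncard_union_le _ _
    _ ≤ (Q \ T).ncard + (T \ Q).ncard + 1 := by
        rw [Set.ncard_singleton]
        exact Nat.add_le_add_right (Set.ncard_union_le _ _) 1
  have hkn1 : S.ncard ≤ n - 1 := by omega
  set k := S.ncard with hk
  have hSNE : S ⊆ N.E := fun x hx => hx.1
  have hf0 : ∀ x ∈ N.E \ S, f (φ' x) = 0 := fun x hx =>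
    zmod2_eq_zero_of_ne_one fun h1 => hx.2 ⟨hx.1, h1⟩
  have hgap := mrank_lt_of_functional hNrep hNEfin f hf0 (hNE ▸ Set.mem_insert a M.E)
    (by rw [hfa]; exact one_ne_zero)
  have hk1 : 1 ≤ k := (Set.ncard_pos hSfin).2 ⟨a, haS⟩
  have hkn : k < n := by omega
  have hNcard : N.E.ncard = M.E.ncard + 1 := by
    rw [hNE, Set.ncard_insert_of_notMem haE hfin]
  have hdiff : (N.E \ S).ncard + k = N.E.ncard := by
    rw [hk, Set.ncard_diff_add_ncard_of_subset hSNE hNEfin]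
  refine hNconn k S (N.E \ S) hk1 hkn
    ⟨Set.union_diff_cancel hSNE, Set.disjoint_sdiff_right, le_refl _, by omega, ?_⟩
  have hle := mrank_le_ncard' N hSfin
  omega
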